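/- Let λ ∈ (0, 1) and κ ∈ (−1, 1), and set D := κ²(1−λ)² − 1 (note D < 0), s := κ·((1−λ)² − 1)/D, and τ := (1−λ)·(κ² − 1)/D. Then the 4×4 complex matrix M := (1/2)(I⊗I) + (s/2)(σ1⊗I) + (τ/2)(σ1⊗σ1) − ((1−λ)/2)(σ2⊗σ2) + ((1−λ)/2)(σ3⊗σ3) is positive semidefinite if and only if κ²·(3 − 2λ)·(2λ² − 5λ + 4) ≤ 4 − 3λ; equivalently, if and only if |κ| ≤ √((4 − 3λ)/((3 − 2λ)(2λ² − 5λ + 4))). -/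

import Mathlib

open Matrix Kronecker ComplexOrder

noncomputable def σ1 : Matrix (Fin 2) (Fin 2) ℂ := !![0, 1; 1, 0]
noncomputable def σ2 : Matrix (Fin 2) (Fin 2) ℂ := !![0, -Complex.I; Complex.I, 0]
noncomputable def σ3 : Matrix (Fin 2) (Fin 2) ℂ := !![1, 0; 0, -1]

noncomputable def Mm (lam s τ : ℝ) : Matrix (Fin 2 × Fin 2) (Fin 2 × Fin 2) ℂ :=
  (((1 : ℝ) / 2 : ℝ) • (((1 : Matrix (Fin 2) (Fin 2) ℂ) ⊗ₖ (1 : Matrix (Fin 2) (Fin 2) ℂ)))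
        + ((s / 2 : ℝ) : ℂ) • (σ1 ⊗ₖ (1 : Matrix (Fin 2) (Fin 2) ℂ))
        + ((τ / 2 : ℝ) : ℂ) • (σ1 ⊗ₖ σ1)
        - (((1 - lam) / 2 : ℝ) : ℂ) • (σ2 ⊗ₖ σ2)
        + (((1 - lam) / 2 : ℝ) : ℂ) • (σ3 ⊗ₖ σ3))

noncomputable def Fq (lam s τ y0 y1 y2 y3 : ℝ) : ℝ :=
  ((2 - lam)/2)*(y0^2+y3^2) + (lam/2)*(y1^2+y2^2)
  + s*(y0*y2+y1*y3) + (τ+(1-lam))*(y0*y3) + (τ-(1-lam))*(y1*y2)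

lemma form_eq (lam s τ : ℝ) (x : Fin 2 × Fin 2 → ℂ) :
    star x ⬝ᵥ (Mm lam s τ) *ᵥ x =
      ((Fq lam s τ (x (0,0)).re (x (0,1)).re (x (1,0)).re (x (1,1)).re
        + Fq lam s τ (x (0,0)).im (x (0,1)).im (x (1,0)).im (x (1,1)).im : ℝ) : ℂ) := by
  simp only [Mm, σ1, σ2, σ3, dotProduct, Matrix.mulVec, Fintype.sum_prod_type,
    Fin.sum_univ_two, Matrix.add_apply, Matrix.sub_apply, Matrix.smul_apply,
    Matrix.kroneckerMap_apply, Matrix.one_apply, Pi.star_apply, smul_eq_mul,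
    Matrix.cons_val', Matrix.cons_val_zero, Matrix.cons_val_one, Matrix.head_cons,
    Matrix.empty_val', Matrix.cons_val_fin_one, Matrix.head_fin_const, Matrix.of_apply, Fq]
  norm_num
  apply Complex.ext <;>
    simp [Complex.add_re, Complex.add_im, Complex.mul_re, Complex.mul_im, Complex.ofReal_re,
      Complex.ofReal_im, ← Complex.ofReal_pow] <;> ring

lemma herm (lam s τ : ℝ) : (Mm lam s τ).IsHermitian := by
  rw [Matrix.IsHermitian]
  ext ⟨i,k⟩ ⟨j,l⟩
  fin_cases i <;> fin_cases k <;> fin_cases j <;> fin_cases l <;>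
    simp [Mm, σ1, σ2, σ3, Matrix.conjTranspose_apply, Matrix.add_apply, Matrix.sub_apply,
      Matrix.smul_apply, Matrix.kroneckerMap_apply, Matrix.one_apply, smul_eq_mul,
      Complex.ext_iff] <;> norm_num [Prod.ext_iff, Fin.ext_iff]

lemma aux1 (c1 c2 e a b : ℝ) (hc1 : 0 < c1) (hdet : e^2 ≤ 4*(c1*c2)) :
    0 ≤ c1*a^2 + e*(a*b) + c2*b^2 := by
  nlinarith [sq_nonneg (2*c1*a + e*b), mul_nonneg (by nlinarith : (0:ℝ) ≤ 4*(c1*c2) - e^2) (sq_nonneg b)]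

lemma aux2 (d e a b : ℝ) (hd : 0 ≤ d) (hd2 : e^2 ≤ 4*d^2) :
    0 ≤ d*(a^2+b^2) - e*(a*b) := by
  have h1 : e ≤ 2*d := by nlinarith
  have h2 : -(2*d) ≤ e := by nlinarith
  nlinarith [mul_nonneg (by linarith : (0:ℝ) ≤ 2*d - e) (sq_nonneg (a+b)),
    mul_nonneg (by linarith : (0:ℝ) ≤ 2*d + e) (sq_nonneg (a-b))]

lemma Fq_nonneg (lam s τ : ℝ) (hc1 : 0 < 3 - 2*lam + τ)
    (hdet : s^2 ≤ (1+τ)^2 - 4*(1-lam)^2) (hd : τ ≤ 1) (hd2 : s^2 ≤ (1-τ)^2)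
    (y0 y1 y2 y3 : ℝ) : 0 ≤ Fq lam s τ y0 y1 y2 y3 := by
  have h1 := aux1 ((3-2*lam+τ)/2) ((2*lam-1+τ)/2) s (y0+y3) (y1+y2)
    (by linarith) (by nlinarith)
  have h2 := aux2 ((1-τ)/2) s (y0-y3) (y1-y2) (by linarith) (by nlinarith)
  have key : 2 * Fq lam s τ y0 y1 y2 y3 =
      (((3-2*lam+τ)/2)*(y0+y3)^2 + s*((y0+y3)*(y1+y2)) + ((2*lam-1+τ)/2)*(y1+y2)^2)
      + (((1-τ)/2)*((y0-y3)^2+(y1-y2)^2) - s*((y0-y3)*(y1-y2))) := by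
    unfold Fq; ring
  linarith

set_option maxHeartbeats 1000000 in
lemma main_iff (lam κ s τ : ℝ) (hlam : lam ∈ Set.Ioo (0 : ℝ) 1)
    (hκ : κ ∈ Set.Ioo (-1 : ℝ) 1)
    (hs : s = κ * ((1 - lam) ^ 2 - 1) / (κ ^ 2 * (1 - lam) ^ 2 - 1))
    (hτ : τ = (1 - lam) * (κ ^ 2 - 1) / (κ ^ 2 * (1 - lam) ^ 2 - 1)) :
    (Mm lam s τ).PosSemidef ↔
      κ ^ 2 * (3 - 2 * lam) * (2 * lam ^ 2 - 5 * lam + 4) ≤ 4 - 3 * lam := by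
  obtain ⟨hl0, hl1⟩ := hlam
  obtain ⟨hk0, hk1⟩ := hκ
  have hk2 : κ ^ 2 < 1 := by nlinarith
  have hQ : 0 < 1 - κ ^ 2 * (1 - lam) ^ 2 := by
    nlinarith [mul_nonneg (sq_nonneg κ) (by nlinarith : (0:ℝ) ≤ 1 - (1 - lam) ^ 2)]
  have hDne : κ ^ 2 * (1 - lam) ^ 2 - 1 ≠ 0 := by nlinarith
  -- scalar identities
  have hτQ : τ * (1 - κ ^ 2 * (1 - lam) ^ 2) = (1 - lam) * (1 - κ ^ 2) := by
    rw [hτ]; field_simp [show (1 - lam) ^ 2 * κ ^ 2 - 1 ≠ 0 by rw [mul_comm]; exact hDne]; ring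
  have hsQ : s * (1 - κ ^ 2 * (1 - lam) ^ 2) = κ * (1 - (1 - lam) ^ 2) := by
    rw [hs]; field_simp [show (1 - lam) ^ 2 * κ ^ 2 - 1 ≠ 0 by rw [mul_comm]; exact hDne]; ring
  have hτ0 : 0 ≤ τ := by
    nlinarith [hτQ, hQ, mul_pos (by linarith : (0:ℝ) < 1 - lam) (by nlinarith : (0:ℝ) < 1 - κ ^ 2)]
  have hτmQ : (1 - τ) * (1 - κ ^ 2 * (1 - lam) ^ 2) = lam * (1 + κ ^ 2 * (1 - lam)) := by
    rw [hτ]; field_simp [show (1 - lam) ^ 2 * κ ^ 2 - 1 ≠ 0 by rw [mul_comm]; exact hDne]; ring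
  have hτ1 : τ ≤ 1 := by
    nlinarith [hτmQ, hQ, mul_pos hl0 (by nlinarith [sq_nonneg κ] : (0:ℝ) < 1 + κ ^ 2 * (1 - lam))]
  have hd2 : s ^ 2 ≤ (1 - τ) ^ 2 := by
    have hkey : ((1-τ)^2 - s^2) * (1 - κ ^ 2 * (1 - lam) ^ 2)^2 =
        lam^2 * (((1-κ)*(1+κ)) * ((1-κ*(1-lam))*(1+κ*(1-lam)))) := by
      rw [hs, hτ]; field_simp [show (1 - lam) ^ 2 * κ ^ 2 - 1 ≠ 0 by rw [mul_comm]; exact hDne]; ring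
    have hpos : 0 ≤ lam^2 * (((1-κ)*(1+κ)) * ((1-κ*(1-lam))*(1+κ*(1-lam)))) := by
      apply mul_nonneg (sq_nonneg _)
      apply mul_nonneg (mul_nonneg (by linarith) (by linarith))
      apply mul_nonneg (by nlinarith) (by nlinarith)
    nlinarith [hkey, hpos, pow_pos hQ 2]
  have hkey2 : ((1+τ)^2 - 4*(1-lam)^2 - s^2) * (1 - κ ^ 2 * (1 - lam) ^ 2)^2 =
      (4 - 3*lam - κ ^ 2 * (3 - 2 * lam) * (2 * lam ^ 2 - 5 * lam + 4)) *
        (lam * (1 - κ ^ 2 * (1 - lam) ^ 2)) := by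
    rw [hs, hτ]; field_simp [show (1 - lam) ^ 2 * κ ^ 2 - 1 ≠ 0 by rw [mul_comm]; exact hDne]; ring
  have hlQ : 0 < lam * (1 - κ ^ 2 * (1 - lam) ^ 2) := mul_pos hl0 hQ
  constructor
  · intro h
    -- apply the quadratic form to the symmetry-adapted vector
    set c1 : ℝ := (3 - 2*lam + τ)/2 with hc1def
    have hx := (posSemidef_iff_dotProduct_mulVec.mp h).2 (fun p : Fin 2 × Fin 2 => if p.1 = p.2 then ((-(s/2) : ℝ) : ℂ) else ((c1 : ℝ) : ℂ))
    rw [form_eq] at hx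
    rw [Complex.zero_le_real] at hx
    norm_num [Complex.ofReal_re, Complex.ofReal_im] at hx
    have hval : Fq lam s τ (-(s/2)) c1 c1 (-(s/2)) + Fq lam s τ 0 0 0 0 =
        2 * c1 * (((3 - 2*lam + τ)/2) * ((2*lam - 1 + τ)/2) - s^2/4) := by
      unfold Fq; rw [hc1def]; ring
    rw [hval] at hx
    have hc1pos : 0 < c1 := by rw [hc1def]; linarith
    have hdetB : 0 ≤ (1+τ)^2 - 4*(1-lam)^2 - s^2 := by nlinarith [hx, hc1pos]
    nlinarith [hkey2, hlQ, mul_nonneg hdetB (sq_nonneg (1 - κ ^ 2 * (1 - lam) ^ 2))]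
  · intro h
    refine posSemidef_iff_dotProduct_mulVec.mpr ⟨herm lam s τ, fun x => ?_⟩
    rw [form_eq, Complex.zero_le_real]
    have hdet : s^2 ≤ (1+τ)^2 - 4*(1-lam)^2 := by
      nlinarith [hkey2, pow_pos hQ 2, mul_nonneg (by linarith :
        (0:ℝ) ≤ 4 - 3*lam - κ ^ 2 * (3 - 2 * lam) * (2 * lam ^ 2 - 5 * lam + 4)) hlQ.le]
    exact add_nonneg (Fq_nonneg lam s τ (by linarith) hdet hτ1 hd2 _ _ _ _)
      (Fq_nonneg lam s τ (by linarith) hdet hτ1 hd2 _ _ _ _)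

/-- reverse-direction Choi matrix of the depolarizing channel.
With D := κ²(1−λ)²−1, s := κ((1−λ)²−1)/D, τ := (1−λ)(κ²−1)/D, the matrix
`½ I⊗I + (s/2) σ1⊗I + (τ/2) σ1⊗σ1 − ((1−λ)/2) σ2⊗σ2 + ((1−λ)/2) σ3⊗σ3`
is PSD iff κ²(3−2λ)(2λ²−5λ+4) ≤ 4−3λ, equivalently iff
|κ| ≤ √((4−3λ)/((3−2λ)(2λ²−5λ+4))). -/
theorem stmt7 (lam κ D s τ : ℝ) (hlam : lam ∈ Set.Ioo (0 : ℝ) 1)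
    (hκ : κ ∈ Set.Ioo (-1 : ℝ) 1)
    (hD : D = κ ^ 2 * (1 - lam) ^ 2 - 1)
    (hs : s = κ * ((1 - lam) ^ 2 - 1) / D)
    (hτ : τ = (1 - lam) * (κ ^ 2 - 1) / D) :
    ((((1 : ℝ) / 2 : ℝ) • (((1 : Matrix (Fin 2) (Fin 2) ℂ) ⊗ₖ (1 : Matrix (Fin 2) (Fin 2) ℂ)))
        + ((s / 2 : ℝ) : ℂ) • (σ1 ⊗ₖ (1 : Matrix (Fin 2) (Fin 2) ℂ))
        + ((τ / 2 : ℝ) : ℂ) • (σ1 ⊗ₖ σ1)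
        - (((1 - lam) / 2 : ℝ) : ℂ) • (σ2 ⊗ₖ σ2)
        + (((1 - lam) / 2 : ℝ) : ℂ) • (σ3 ⊗ₖ σ3)).PosSemidef
      ↔ κ ^ 2 * (3 - 2 * lam) * (2 * lam ^ 2 - 5 * lam + 4) ≤ 4 - 3 * lam)
    ∧
    ((((1 : ℝ) / 2 : ℝ) • (((1 : Matrix (Fin 2) (Fin 2) ℂ) ⊗ₖ (1 : Matrix (Fin 2) (Fin 2) ℂ)))
        + ((s / 2 : ℝ) : ℂ) • (σ1 ⊗ₖ (1 : Matrix (Fin 2) (Fin 2) ℂ))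
        + ((τ / 2 : ℝ) : ℂ) • (σ1 ⊗ₖ σ1)
        - (((1 - lam) / 2 : ℝ) : ℂ) • (σ2 ⊗ₖ σ2)
        + (((1 - lam) / 2 : ℝ) : ℂ) • (σ3 ⊗ₖ σ3)).PosSemidef
      ↔ |κ| ≤ Real.sqrt ((4 - 3 * lam) / ((3 - 2 * lam) * (2 * lam ^ 2 - 5 * lam + 4)))) := by
  subst hD
  have h1 := main_iff lam κ s τ hlam hκ hs hτ
  obtain ⟨hl0, hl1⟩ := hlam
  have hden : 0 < (3 - 2 * lam) * (2 * lam ^ 2 - 5 * lam + 4) := by nlinarith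
  have hnum : (0:ℝ) < 4 - 3 * lam := by linarith
  have hiff2 : (κ ^ 2 * (3 - 2 * lam) * (2 * lam ^ 2 - 5 * lam + 4) ≤ 4 - 3 * lam) ↔
      |κ| ≤ Real.sqrt ((4 - 3 * lam) / ((3 - 2 * lam) * (2 * lam ^ 2 - 5 * lam + 4))) := by
    have hE : κ ^ 2 * ((3 - 2 * lam) * (2 * lam ^ 2 - 5 * lam + 4)) =
        κ ^ 2 * (3 - 2 * lam) * (2 * lam ^ 2 - 5 * lam + 4) := by ring
    constructor
    · intro h
      have hR : κ ^ 2 ≤ (4 - 3 * lam) / ((3 - 2 * lam) * (2 * lam ^ 2 - 5 * lam + 4)) := by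
        rw [le_div_iff₀ hden]; linarith [hE]
      calc |κ| = Real.sqrt (κ ^ 2) := (Real.sqrt_sq_eq_abs κ).symm
        _ ≤ _ := Real.sqrt_le_sqrt hR
    · intro h
      have hRnn : (0:ℝ) ≤ (4 - 3 * lam) / ((3 - 2 * lam) * (2 * lam ^ 2 - 5 * lam + 4)) :=
        le_of_lt (div_pos hnum hden)
      have h2 : |κ| ^ 2 ≤ Real.sqrt ((4 - 3 * lam) / ((3 - 2 * lam) * (2 * lam ^ 2 - 5 * lam + 4))) ^ 2 :=
        pow_le_pow_left₀ (abs_nonneg κ) h 2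
      rw [Real.sq_sqrt hRnn, sq_abs] at h2
      rw [le_div_iff₀ hden] at h2
      linarith [hE]
  exact ⟨h1, h1.trans hiff2⟩
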